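/- Let β ∈ (0, 1) and γ ∈ ℝ, and let λ be the value returned by the adaptive γ-safeguarding case analysis: λ = 0 if γ = 0 or γ ≥ 1; λ = β/(γ(β + sign(γ))) if γ < 1, γ ≠ 0 and |γ|/|1 − γ| > β; and λ = 1 otherwise. Then the scaled coefficient satisfies |λγ| ≤ β·|1 − λγ|; that is, after safeguarding, the ratio |λγ|/|1 − λγ| is at most β. -/

import Mathlib

/-- Let `β ∈ (0,1)` and `γ ∈ ℝ`, and let `λ` be the value returned by the
adaptive γ-safeguarding case analysis: `λ = 0` if `γ = 0` or `γ ≥ 1`;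
`λ = β/(γ(β + sign γ))` if `γ < 1`, `γ ≠ 0` and `|γ|/|1 − γ| > β`; and `λ = 1` otherwise.
Then `|λγ| ≤ β·|1 − λγ|`, i.e. after safeguarding the ratio `|λγ|/|1 − λγ|` is at most `β`. -/
theorem stmt_7 (β γ lam : ℝ)
    (hβ : β ∈ Set.Ioo (0 : ℝ) 1)
    (hlam : lam = if γ = 0 ∨ 1 ≤ γ then 0
      else if β < |γ| / |1 - γ| then β / (γ * (β + Real.sign γ))
      else 1) :
    |lam * γ| ≤ β * |1 - lam * γ| := by
  obtain ⟨hβ0, hβ1⟩ := hβ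
  by_cases h1 : γ = 0 ∨ 1 ≤ γ
  · simp [hlam, h1]; positivity
  · push_neg at h1
    obtain ⟨hγ0, hγ1⟩ := h1
    rw [if_neg (by push_neg; exact ⟨hγ0, hγ1⟩)] at hlam
    by_cases h2 : β < |γ| / |1 - γ|
    · rw [if_pos h2] at hlam
      have hlg : lam * γ = β / (β + Real.sign γ) := by
        rw [hlam, div_mul_eq_mul_div, mul_comm β γ, mul_div_mul_left _ _ hγ0]
      rcases lt_or_gt_of_ne hγ0 with hneg | hpos
      · have hs : Real.sign γ = -1 := Real.sign_of_neg hneg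
        rw [hs] at hlg
        have hb : β + (-1:ℝ) ≠ 0 := (by linarith : β + (-1:ℝ) < 0).ne
        have h1 : (1 : ℝ) - β / (β + -1) = -1 / (β + -1) := by
          field_simp
          ring
        rw [hlg, h1, abs_div, abs_div, abs_neg, abs_one, abs_of_pos hβ0, mul_one_div]
      · have hs : Real.sign γ = 1 := Real.sign_of_pos hpos
        rw [hs] at hlg
        have hb : β + (1:ℝ) ≠ 0 := (by linarith : (0:ℝ) < β + 1).ne'
        have h1 : (1 : ℝ) - β / (β + 1) = 1 / (β + 1) := by
          field_simp
          ring
        rw [hlg, h1, abs_div, abs_div, abs_one, abs_of_pos hβ0, mul_one_div]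
    · rw [if_neg h2] at hlam
      push_neg at h2
      subst hlam
      rw [one_mul]
      have h3 : |1 - γ| > 0 := abs_pos.mpr (by linarith)
      calc |γ| = |γ| / |1 - γ| * |1 - γ| := by field_simp
        _ ≤ β * |1 - γ| := by
            apply mul_le_mul_of_nonneg_right h2 (le_of_lt h3)
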